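/- Suppose x0, x1, y0, y1, ξ0, ξ1, η0, η1 : ℝ → ℝ are differentiable on (0,∞) and satisfy the full M=1 system: s·x0' = -η0·x0 - x1, s·x1' = -η1·x0 + s·x0 + ξ0·x0 + ξ1·x1, s·y1' = -ξ1·y1 + y0, s·y0' = -ξ0·y1 - s·y1 + η0·y0 + η1·y1, ξ0' = x0·y0, ξ1' = x0·y1, η0' = x0·y1, η1' = x1·y1. Then the function E(s) := (η1 - ξ0 - s)·x0·y1 + η0·x0·y0 - ξ1·x1·y1 + x1·y0 + η0 has derivative zero on (0,∞) (so E is constant). -/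

import Mathlib

open Set

theorem stmt_3 (x0 x1 y0 y1 ξ0 ξ1 η0 η1 : ℝ → ℝ)
    (hx0 : ∀ s ∈ Ioi (0:ℝ), DifferentiableAt ℝ x0 s)
    (hx1 : ∀ s ∈ Ioi (0:ℝ), DifferentiableAt ℝ x1 s)
    (hy0 : ∀ s ∈ Ioi (0:ℝ), DifferentiableAt ℝ y0 s)
    (hy1 : ∀ s ∈ Ioi (0:ℝ), DifferentiableAt ℝ y1 s)
    (hξ0 : ∀ s ∈ Ioi (0:ℝ), DifferentiableAt ℝ ξ0 s)
    (hξ1 : ∀ s ∈ Ioi (0:ℝ), DifferentiableAt ℝ ξ1 s)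
    (hη0 : ∀ s ∈ Ioi (0:ℝ), DifferentiableAt ℝ η0 s)
    (hη1 : ∀ s ∈ Ioi (0:ℝ), DifferentiableAt ℝ η1 s)
    (e1 : ∀ s ∈ Ioi (0:ℝ), s * deriv x0 s = -η0 s * x0 s - x1 s)
    (e2 : ∀ s ∈ Ioi (0:ℝ), s * deriv x1 s =
      -η1 s * x0 s + s * x0 s + ξ0 s * x0 s + ξ1 s * x1 s)
    (e3 : ∀ s ∈ Ioi (0:ℝ), s * deriv y1 s = -ξ1 s * y1 s + y0 s)
    (e4 : ∀ s ∈ Ioi (0:ℝ), s * deriv y0 s =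
      -ξ0 s * y1 s - s * y1 s + η0 s * y0 s + η1 s * y1 s)
    (e5 : ∀ s ∈ Ioi (0:ℝ), deriv ξ0 s = x0 s * y0 s)
    (e6 : ∀ s ∈ Ioi (0:ℝ), deriv ξ1 s = x0 s * y1 s)
    (e7 : ∀ s ∈ Ioi (0:ℝ), deriv η0 s = x0 s * y1 s)
    (e8 : ∀ s ∈ Ioi (0:ℝ), deriv η1 s = x1 s * y1 s) :
    ∀ s ∈ Ioi (0:ℝ),
      deriv (fun t => (η1 t - ξ0 t - t) * x0 t * y1 t + η0 t * x0 t * y0 t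
        - ξ1 t * x1 t * y1 t + x1 t * y0 t + η0 t) s = 0 := by

  intro s hs
  have hs0 : s ≠ 0 := ne_of_gt hs
  have Hx0 := (hx0 s hs).hasDerivAt
  have Hx1 := (hx1 s hs).hasDerivAt
  have Hy0 := (hy0 s hs).hasDerivAt
  have Hy1 := (hy1 s hs).hasDerivAt
  have Hξ0 := (hξ0 s hs).hasDerivAt
  have Hξ1 := (hξ1 s hs).hasDerivAt
  have Hη0 := (hη0 s hs).hasDerivAt
  have Hη1 := (hη1 s hs).hasDerivAt
  have Hid : HasDerivAt (fun t : ℝ => t) 1 s := hasDerivAt_id s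
  have H := (((((((Hη1.sub Hξ0).sub Hid).mul Hx0).mul Hy1).add
      ((Hη0.mul Hx0).mul Hy0)).sub ((Hξ1.mul Hx1).mul Hy1)).add
      (Hx1.mul Hy0)).add Hη0
  rw [(show deriv (fun t => (η1 t - ξ0 t - t) * x0 t * y1 t + η0 t * x0 t * y0 t
        - ξ1 t * x1 t * y1 t + x1 t * y0 t + η0 t) s = _ from H.deriv)]
  simp only [Pi.mul_apply, Pi.sub_apply]
  have h1 : deriv x0 s = (-η0 s * x0 s - x1 s) / s := by
    field_simp; linarith [e1 s hs]
  have h2 : deriv x1 s = (-η1 s * x0 s + s * x0 s + ξ0 s * x0 s + ξ1 s * x1 s) / s := by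
    field_simp; linarith [e2 s hs]
  have h3 : deriv y1 s = (-ξ1 s * y1 s + y0 s) / s := by
    field_simp; linarith [e3 s hs]
  have h4 : deriv y0 s = (-ξ0 s * y1 s - s * y1 s + η0 s * y0 s + η1 s * y1 s) / s := by
    field_simp; linarith [e4 s hs]
  rw [h1, h2, h3, h4, e5 s hs, e6 s hs, e7 s hs, e8 s hs]
  field_simp
  ring
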